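/- If the DAG G with parent map Π is simple with respect to some topological order π, then every parent set of G is complete: for all i ∈ {1,…,p} and all j, k ∈ Π(i) with j < k, one has j ∈ Π(k). (The clique condition on parent sets that makes a simple DAG a perfect, hence decomposable, DAG.) -/

import Mathlib

/--
Fix a DAG `G` on vertex set `Fin p` (vertices `1,…,p`, 0-indexed), for which the
identity order is topological, given by its parent map `Par` with `Par i ⊆ {0,…,i-1}`.
A topological order of `G` is a permutation `π` of `Fin p` with `j ∈ Par i → π⁻¹ j < π⁻¹ i`;
`G` is simple with respect to `π` if `Par (π (i+1)) ⊆ Par (π i) ∪ {π i}` for all `i`.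
If `G` is simple with respect to some topological order `π`, then every parent set of `G`
is complete: for all `i` and all `j, k ∈ Par i` with `j < k`, one has `j ∈ Par k`.
-/
theorem simple_dag_parent_sets_complete (p : ℕ) (Par : Fin p → Finset (Fin p))
    (hpar : ∀ i : Fin p, ∀ j ∈ Par i, j < i)
    (π : Equiv.Perm (Fin p))
    (htopo : ∀ i : Fin p, ∀ j ∈ Par i, π.symm j < π.symm i)
    (hsimple : ∀ (i : ℕ) (h : i + 1 < p),
      Par (π ⟨i + 1, h⟩) ⊆
        Par (π ⟨i, Nat.lt_of_succ_lt h⟩) ∪ {π ⟨i, Nat.lt_of_succ_lt h⟩}) :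
    ∀ i : Fin p, ∀ j ∈ Par i, ∀ k ∈ Par i, j < k → j ∈ Par k := by
  intro i j hj k hk hjk
  have key : ∀ s : ℕ, ∀ hs : s < p,
      j ∈ Par (π ⟨s, hs⟩) ∪ {π ⟨s, hs⟩} →
      k ∈ Par (π ⟨s, hs⟩) ∪ {π ⟨s, hs⟩} → j ∈ Par k := by
    intro s
    induction s using Nat.strong_induction_on with
    | _ s ih =>
      intro hs hjs hks
      rcases Finset.mem_union.mp hks with hkP | hkS
      · rcases Finset.mem_union.mp hjs with hjP | hjS
        · -- both in Par (π s); descend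
          have hsj : (π.symm j : ℕ) < s := by
            have := htopo _ _ hjP
            have h2 : π.symm j < ⟨s, hs⟩ := by simpa using this
            exact h2
          obtain ⟨t, rfl⟩ : ∃ t, s = t + 1 := ⟨s - 1, by omega⟩
          have hsub := hsimple t hs
          exact ih t (Nat.lt_succ_self t) (Nat.lt_of_succ_lt hs)
            (hsub hjP) (hsub hkP)
        · -- π s = j, but then k ∈ Par j ∪ {j}: impossible
          have hj' : j = π ⟨s, hs⟩ := Finset.mem_singleton.mp hjS
          exfalso
          rcases Finset.mem_union.mp hks with hkP | hkS
          · have := hpar _ _ (hj'.symm ▸ hkP)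
            exact absurd hjk (not_lt.mpr (le_of_lt this))
          · have : k = j := (Finset.mem_singleton.mp hkS).trans hj'.symm
            exact absurd (this ▸ hjk) (lt_irrefl _)
      · -- π s = k
        have hk' : k = π ⟨s, hs⟩ := Finset.mem_singleton.mp hkS
        rcases Finset.mem_union.mp hjs with hjP | hjS
        · exact hk'.symm ▸ hjP
        · exact absurd ((Finset.mem_singleton.mp hjS).trans hk'.symm ▸ hjk)
            (lt_irrefl _)
  have hi : π ⟨(π.symm i : ℕ), (π.symm i).isLt⟩ = i := by
    simp
  exact key (π.symm i) (π.symm i).isLt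
    (by rw [hi]; exact Finset.mem_union_left _ hj)
    (by rw [hi]; exact Finset.mem_union_left _ hk)
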